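/- Let T ∈ Δ_K have full support and let T̄ ∈ Δ_K have full support. Define the centered log-odds r_k = log(T_k/T̄_k) − (1/K) Σ_j log(T_j/T̄_j) and the code z_T = ((K−1)/(Kβ)) Σ_k r_k v_k, where v_1,…,v_K are regular simplex vertices and β > 0. Then the fixed witness S_k(z) = softmax_k(β v_k·z + log T̄_k) satisfies S(z_T) = T exactly, i.e. KL(T ‖ S(z_T)) = 0. -/

import Mathlib

open Finset

/-- Dot product on `Fin n → ℝ`. -/
def dot {n : ℕ} (u v : Fin n → ℝ) : ℝ := ∑ i, u i * v i

/-- KL divergence between two finite probability vectors. -/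
noncomputable def KL {K : ℕ} (p q : Fin K → ℝ) : ℝ :=
  ∑ k, p k * Real.log (p k / q k)

/-- Simplex log-odds inverse: the analytic code `z_T` built from the centered log-odds of a
full-support teacher `T` against `T̄` satisfies `S(z_T) = T` exactly, where
`S_k(z) = softmax_k(β v_k·z + log T̄_k)`; hence `KL(T ‖ S(z_T)) = 0`. -/
theorem simplex_log_odds_inverse {K dz : ℕ} (hK : 2 ≤ K) (hd : K - 1 ≤ dz)
    (β : ℝ) (hβ : 0 < β)
    (v : Fin K → Fin dz → ℝ)
    (hvsum : ∑ k, v k = 0)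
    (hvnorm : ∀ i, dot (v i) (v i) = 1)
    (hvcross : ∀ i j, i ≠ j → dot (v i) (v j) = -1 / ((K : ℝ) - 1))
    (T Tbar : Fin K → ℝ)
    (hT0 : ∀ k, 0 < T k) (hT1 : ∑ k, T k = 1)
    (hTbar0 : ∀ k, 0 < Tbar k) (hTbar1 : ∑ k, Tbar k = 1)
    (r : Fin K → ℝ)
    (hr : ∀ k, r k = Real.log (T k / Tbar k) - (1 / (K : ℝ)) * ∑ j, Real.log (T j / Tbar j))
    (zT : Fin dz → ℝ)
    (hzT : zT = (((K : ℝ) - 1) / ((K : ℝ) * β)) • ∑ k, r k • v k)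
    (S : (Fin dz → ℝ) → Fin K → ℝ)
    (hS : ∀ z k, S z k =
      Real.exp (β * dot (v k) z + Real.log (Tbar k)) /
        ∑ j, Real.exp (β * dot (v j) z + Real.log (Tbar j))) :
    (∀ k, S zT k = T k) ∧ KL T (S zT) = 0 := by

  have hK1 : (1:ℝ) < (K:ℝ) := by exact_mod_cast lt_of_lt_of_le one_lt_two hK
  have hKne : (K:ℝ) ≠ 0 := by positivity
  have hKm1 : (K:ℝ) - 1 ≠ 0 := by linarith
  have hrsum : ∑ k, r k = 0 := by
    simp only [hr, Finset.sum_sub_distrib, Finset.sum_const, Finset.card_univ,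
      Fintype.card_fin, nsmul_eq_mul]
    field_simp
    ring
  have hdot : ∀ k, β * dot (v k) zT = r k := by
    intro k
    have h1 : dot (v k) zT = (((K:ℝ)-1)/((K:ℝ)*β)) * ∑ j, r j * dot (v k) (v j) := by
      simp only [hzT, dot, Pi.smul_apply, Finset.sum_apply, smul_eq_mul, Finset.mul_sum]
      rw [Finset.sum_comm]
      exact Finset.sum_congr rfl fun j _ => Finset.sum_congr rfl fun i _ => by ring
    have hse : ∑ j ∈ Finset.univ.erase k, r j = - r k := by
      have h := Finset.add_sum_erase Finset.univ r (Finset.mem_univ k)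
      rw [hrsum] at h
      linarith
    have h2 : ∑ j, r j * dot (v k) (v j) = r k * ((K:ℝ)/((K:ℝ)-1)) := by
      rw [← Finset.add_sum_erase _ _ (Finset.mem_univ k), hvnorm k]
      have h3 : ∑ j ∈ Finset.univ.erase k, r j * dot (v k) (v j)
          = ∑ j ∈ Finset.univ.erase k, r j * (-1/((K:ℝ)-1)) := by
        refine Finset.sum_congr rfl fun j hj => ?_
        rw [hvcross k j (Finset.ne_of_mem_erase hj).symm]
      rw [h3, ← Finset.sum_mul, hse]
      field_simp
      ring
    rw [h1, h2]
    field_simp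
  set C := (1/(K:ℝ)) * ∑ j, Real.log (T j / Tbar j) with hC
  have hexp : ∀ k, Real.exp (β * dot (v k) zT + Real.log (Tbar k)) = T k * Real.exp (-C) := by
    intro k
    rw [hdot k, hr k, Real.exp_add, Real.exp_sub, Real.exp_log (hTbar0 k),
      Real.exp_log (div_pos (hT0 k) (hTbar0 k)), Real.exp_neg]
    field_simp [(hTbar0 k).ne']
  have hSk : ∀ k, S zT k = T k := by
    intro k
    rw [hS]
    simp only [hexp]
    rw [← Finset.sum_mul, hT1, one_mul]
    exact mul_div_cancel_right₀ _ (Real.exp_ne_zero _)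
  refine ⟨hSk, ?_⟩
  unfold KL
  refine Finset.sum_eq_zero fun k _ => ?_
  rw [hSk k, div_self (hT0 k).ne']
  simp
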